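/- Every Fσ measure-zero subset C of Cantor space is contained in a set of the form H_{b,φ} = {x ∈ 2^ℕ : for all but finitely many n, x↾[b(n),b(n+1)) ∈ φ(n)}, where b ∈ ℕ^ℕ is strictly increasing with b(0)=0 and φ(n) ⊆ 2^{[b(n),b(n+1))} satisfies |φ(n)|/2^{b(n+1)-b(n)} ≤ 2^{-n} for all n. -/

import Mathlib

open Filter MeasureTheory
open scoped ENNReal

noncomputable def projF (E : Set (ℕ → Bool)) (N : ℕ) :
    Finset (↥(Finset.Ico 0 N) → Bool) :=
  (Set.toFinite ((fun x (i : ↥(Finset.Ico 0 N)) => x i.1) '' E)).toFinset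

lemma mem_projF {E : Set (ℕ → Bool)} {N : ℕ} {f : ↥(Finset.Ico 0 N) → Bool} :
    f ∈ projF E N ↔ ∃ x ∈ E, (fun i : ↥(Finset.Ico 0 N) => x i.1) = f := by
  simp [projF, Set.Finite.mem_toFinset, Set.mem_image]

lemma key (μ : Measure (ℕ → Bool))
    (hμ : ∀ (I : Finset ℕ) (S : Finset (↥I → Bool)),
      μ {x : ℕ → Bool | (fun i : ↥I => x i.1) ∈ S} = (S.card : ℝ≥0∞) / 2 ^ I.card)
    {E : Set (ℕ → Bool)} (hE : IsClosed E) (hE0 : μ E = 0) (n m : ℕ) :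
    ∃ N, m < N ∧ (projF E N).card * 2 ^ n ≤ 2 ^ (N - m) := by
  set s : ℕ → Set (ℕ → Bool) :=
    fun N => {x | (fun i : ↥(Finset.Ico 0 N) => x i.1) ∈ projF E N} with hs
  have hmeas : ∀ N, MeasurableSet (s N) := by
    intro N
    have : Measurable fun (x : ℕ → Bool) (i : ↥(Finset.Ico 0 N)) => x i.1 :=
      measurable_pi_lambda _ fun i => measurable_pi_apply i.1
    exact this ((Finset.finite_toSet (projF E N)).measurableSet)
  have hanti : Antitone s := by
    intro N M hNM x hx
    obtain ⟨y, hyE, hy⟩ := mem_projF.mp hx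
    refine mem_projF.mpr ⟨y, hyE, funext fun i => ?_⟩
    have hi : i.1 ∈ Finset.Ico 0 M := by
      simp only [Finset.mem_Ico] at *
      exact ⟨Nat.zero_le _, lt_of_lt_of_le (Finset.mem_Ico.mp i.2).2 hNM⟩
    exact congrFun hy ⟨i.1, hi⟩
  have hsub : ⋂ N, s N ⊆ E := by
    intro x hx
    have hy : ∀ N : ℕ, ∃ y ∈ E, ∀ i < N, y i = x i := by
      intro N
      obtain ⟨y, hyE, hy⟩ := mem_projF.mp (Set.mem_iInter.mp hx N)
      exact ⟨y, hyE, fun i hi => congrFun hy ⟨i, by simp [Finset.mem_Ico, hi]⟩⟩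
    choose y hyE hyx using hy
    have htend : Tendsto y atTop (nhds x) := by
      rw [tendsto_pi_nhds]
      intro i
      refine Tendsto.congr' ?_ tendsto_const_nhds
      filter_upwards [eventually_gt_atTop i] with N hN
      exact (hyx N i hN).symm
    exact hE.mem_of_tendsto htend (Eventually.of_forall hyE)
  have hμs : ∀ N, μ (s N) = ((projF E N).card : ℝ≥0∞) / 2 ^ N := by
    intro N
    have := hμ (Finset.Ico 0 N) (projF E N)
    simpa using this
  have htop : ∃ N, μ (s N) ≠ ∞ := by
    refine ⟨0, ?_⟩
    rw [hμs]
    simp [ENNReal.div_eq_top]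
  have hlim : Tendsto (μ ∘ s) atTop (nhds 0) := by
    have h := tendsto_measure_iInter_atTop (μ := μ)
      (fun N => (hmeas N).nullMeasurableSet) hanti htop
    have h0 : μ (⋂ N, s N) = 0 :=
      le_antisymm (hE0 ▸ measure_mono hsub) (zero_le)
    rwa [h0] at h
  have hpos : (0 : ℝ≥0∞) < ((2 : ℝ≥0∞) ^ (m + n))⁻¹ := by
    simp [ENNReal.inv_pos]
  obtain ⟨N, hN1, hN2⟩ :=
    ((hlim.eventually_lt_const hpos).and (eventually_ge_atTop (m + n + 1))).exists
  refine ⟨N, by omega, ?_⟩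
  rw [Function.comp_apply, hμs] at hN1
  have hne : ∀ k : ℕ, ((2 : ℝ≥0∞) ^ k) ≠ ⊤ := fun k => ENNReal.pow_ne_top ENNReal.ofNat_ne_top
  have h2 : ((projF E N).card : ℝ≥0∞) < ((2 : ℝ≥0∞) ^ (m + n))⁻¹ * 2 ^ N := by
    rwa [ENNReal.div_lt_iff (Or.inl (by positivity)) (Or.inl (hne N))] at hN1
  have h3 : ((projF E N).card : ℝ≥0∞) * 2 ^ (m + n) < 2 ^ N := by
    calc ((projF E N).card : ℝ≥0∞) * 2 ^ (m + n)
        < ((2 : ℝ≥0∞) ^ (m + n))⁻¹ * 2 ^ N * 2 ^ (m + n) := by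
          rw [mul_comm ((projF E N).card : ℝ≥0∞), mul_comm (((2 : ℝ≥0∞) ^ (m + n))⁻¹ * 2 ^ N)]
          exact ENNReal.mul_lt_mul_right (by positivity) (hne _) h2
      _ = 2 ^ N := by
          rw [mul_comm (((2 : ℝ≥0∞) ^ (m + n))⁻¹), mul_assoc,
            ENNReal.inv_mul_cancel (by positivity) (hne _), mul_one]
  have h4 : (projF E N).card * 2 ^ (m + n) < 2 ^ N := by
    have := h3
    rw [show ((2 : ℝ≥0∞) ^ (m+n)) = ((2 ^ (m+n) : ℕ) : ℝ≥0∞) by push_cast; ring,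
      show ((2 : ℝ≥0∞) ^ N) = ((2 ^ N : ℕ) : ℝ≥0∞) by push_cast; ring,
      ← Nat.cast_mul, Nat.cast_lt] at this
    exact this
  have hNm : 2 ^ N = 2 ^ (N - m) * 2 ^ m := by
    rw [← pow_add]; congr 1; omega
  have h5 : (projF E N).card * 2 ^ n * 2 ^ m < 2 ^ (N - m) * 2 ^ m := by
    rw [mul_assoc, ← pow_add, ← hNm]
    rwa [show n + m = m + n by ring]
  exact le_of_lt (Nat.lt_of_mul_lt_mul_right h5)

/-- Every Fσ measure-zero subset `C` of Cantor space (a countable union of closed null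
sets w.r.t. the coin-flipping measure `μ`) is contained in a set of the form
`H_{b,φ} = {x : x↾[b n, b (n+1)) ∈ φ n for all but finitely many n}`, where `b` is
strictly increasing with `b 0 = 0` and `|φ n| * 2^n ≤ 2^(b (n+1) - b n)` for all `n`. -/
theorem stmt4 (μ : Measure (ℕ → Bool))
    (hμ : ∀ (I : Finset ℕ) (S : Finset (↥I → Bool)),
      μ {x : ℕ → Bool | (fun i : ↥I => x i.1) ∈ S} = (S.card : ℝ≥0∞) / 2 ^ I.card)
    (C : Set (ℕ → Bool))
    (hC : ∃ D : ℕ → Set (ℕ → Bool),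
      (∀ n, IsClosed (D n) ∧ μ (D n) = 0) ∧ C = ⋃ n, D n) :
    ∃ b : ℕ → ℕ, StrictMono b ∧ b 0 = 0 ∧
      ∃ φ : (n : ℕ) → Finset (↥(Finset.Ico (b n) (b (n + 1))) → Bool),
        (∀ n, (φ n).card * 2 ^ n ≤ 2 ^ (b (n + 1) - b n)) ∧
        C ⊆ {x : ℕ → Bool | ∀ᶠ n in Filter.atTop,
          (fun i : ↥(Finset.Ico (b n) (b (n + 1))) => x i.1) ∈ φ n} := by
  obtain ⟨D, hD, rfl⟩ := hC
  set E : ℕ → Set (ℕ → Bool) := fun n => ⋃ k ∈ Finset.range (n + 1), D k with hEdef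
  have hEc : ∀ n, IsClosed (E n) := fun n =>
    Set.Finite.isClosed_biUnion (Finset.finite_toSet _) (fun k _ => (hD k).1)
  have hE0 : ∀ n, μ (E n) = 0 := by
    intro n
    refine measure_biUnion_null_iff ?_ |>.mpr fun k _ => (hD k).2
    exact (Finset.range (n + 1)).countable_toSet
  have L : ∀ n m : ℕ, ∃ N, m < N ∧ (projF (E n) N).card * 2 ^ n ≤ 2 ^ (N - m) :=
    fun n m => key μ hμ (hEc n) (hE0 n) n m
  set b : ℕ → ℕ := fun n => Nat.rec 0 (fun k bk => (L k bk).choose) n with hbdef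
  have hbsucc : ∀ k, b (k + 1) = (L k (b k)).choose := fun k => rfl
  have hblt : ∀ k, b k < b (k + 1) := fun k => (L k (b k)).choose_spec.1
  have hbnd : ∀ k, (projF (E k) (b (k + 1))).card * 2 ^ k ≤ 2 ^ (b (k + 1) - b k) :=
    fun k => (L k (b k)).choose_spec.2
  refine ⟨b, strictMono_nat_of_lt_succ hblt, rfl, ?_⟩
  refine ⟨fun n => Finset.image
    (fun (f : ↥(Finset.Ico 0 (b (n + 1))) → Bool) (i : ↥(Finset.Ico (b n) (b (n + 1)))) =>
      f ⟨i.1, Finset.mem_Ico.mpr ⟨Nat.zero_le _, (Finset.mem_Ico.mp i.2).2⟩⟩)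
    (projF (E n) (b (n + 1))), ?_, ?_⟩
  · intro n
    exact le_trans (Nat.mul_le_mul_right _ (Finset.card_image_le)) (hbnd n)
  · intro x hx
    obtain ⟨k, hk⟩ := Set.mem_iUnion.mp hx
    simp only [Set.mem_setOf_eq]
    filter_upwards [eventually_ge_atTop k] with n hn
    have hxE : x ∈ E n := Set.mem_biUnion (Finset.mem_range.mpr (by omega)) hk
    have hg : (fun i : ↥(Finset.Ico 0 (b (n + 1))) => x i.1) ∈ projF (E n) (b (n + 1)) :=
      mem_projF.mpr ⟨x, hxE, rfl⟩
    exact Finset.mem_image.mpr ⟨_, hg, rfl⟩
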